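/- For v > 0 define A(v) = n/σ² + (n₀/σ₀²)/(2v(n₀/σ₀² + 1/(2v))) and B(v) = nȳ/σ² + n₀ȳ₀/(σ₀²(1 + 2vn₀/σ₀²)), and for a₀ > 0 define σ_p²(a₀) = (n/σ² + a₀n₀/σ₀²)⁻¹ and μ_p(a₀) = σ_p²(a₀) · (nȳ/σ² + a₀n₀ȳ₀/σ₀²). Then, for every v > 0 and a₀ > 0, the two equalities σ_p²(a₀) = A(v)⁻¹ and μ_p(a₀) = B(v)/A(v) hold simultaneously if and only if a₀ = f(v) = (1 + 2vn₀/σ₀²)⁻¹; in particular, (n₀/σ₀²)/(2v(n₀/σ₀² + 1/(2v))) = f(v) · n₀/σ₀². -/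

import Mathlib

open Real

/-- the BHM conditional posterior (precision `A(v)`, linear coefficient `B(v)`,
in the vague-hyperprior limit) matches the NPP conditional posterior (variance `σ_p²(a₀)`,
mean `μ_p(a₀)`) if and only if `a₀ = f(v) = (1 + 2vn₀/σ₀²)⁻¹`; in particular
`(n₀/σ₀²)/(2v(n₀/σ₀² + 1/(2v))) = f(v)·n₀/σ₀²`. -/
theorem stmt_1 (σ2 σ02 n n0 : ℝ) (hσ2 : 0 < σ2) (hσ02 : 0 < σ02) (hn : 0 < n) (hn0 : 0 < n0)
    (ybar ybar0 : ℝ)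
    (f A B σp2 μp : ℝ → ℝ)
    (hf : ∀ v, f v = (1 + 2 * v * n0 / σ02)⁻¹)
    (hA : ∀ v, A v = n / σ2 + (n0 / σ02) / (2 * v * (n0 / σ02 + 1 / (2 * v))))
    (hB : ∀ v, B v = n * ybar / σ2 + n0 * ybar0 / (σ02 * (1 + 2 * v * n0 / σ02)))
    (hσp2 : ∀ a0, σp2 a0 = (n / σ2 + a0 * n0 / σ02)⁻¹)
    (hμp : ∀ a0, μp a0 = σp2 a0 * (n * ybar / σ2 + a0 * n0 * ybar0 / σ02)) :
    (∀ v > 0, ∀ a0 > 0,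
      (σp2 a0 = (A v)⁻¹ ∧ μp a0 = B v / A v) ↔ a0 = f v) ∧
    (∀ v > 0, (n0 / σ02) / (2 * v * (n0 / σ02 + 1 / (2 * v))) = f v * (n0 / σ02)) := by
  have key : ∀ v > 0, (n0 / σ02) / (2 * v * (n0 / σ02 + 1 / (2 * v))) = f v * (n0 / σ02) := by
    intro v hv
    rw [hf]
    have h1 : (0:ℝ) < 1 + 2 * v * n0 / σ02 := by positivity
    have h2 : 2 * v * (n0 / σ02 + 1 / (2 * v)) = 1 + 2 * v * n0 / σ02 := by
      field_simp; ring
    rw [h2]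
    field_simp
  refine ⟨?_, key⟩
  intro v hv a0 ha0
  have hfv : (0:ℝ) < 1 + 2 * v * n0 / σ02 := by positivity
  have hAv : A v = n / σ2 + f v * n0 / σ02 := by
    rw [hA, key v hv]; ring
  have hBv : B v = n * ybar / σ2 + f v * n0 * ybar0 / σ02 := by
    rw [hB, hf]
    have : σ02 * (1 + 2 * v * n0 / σ02) ≠ 0 := by positivity
    field_simp
  have hfpos : 0 < f v := by rw [hf]; positivity
  have hApos : 0 < A v := by rw [hAv]; positivity
  have hprec : 0 < n / σ2 + a0 * n0 / σ02 := by positivity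
  constructor
  · rintro ⟨h1, _⟩
    rw [hσp2, hAv] at h1
    have := inv_injective h1
    have hn0σ : n0 / σ02 ≠ 0 := by positivity
    field_simp at this
    have h' : (σ2 * n0) * (a0 - f v) = 0 := by linear_combination this
    rcases mul_eq_zero.1 h' with h | h
    · exact absurd h (by positivity)
    · linarith
  · rintro rfl
    have hs : σp2 (f v) = (A v)⁻¹ := by rw [hσp2, hAv]
    refine ⟨hs, ?_⟩
    rw [hμp, hs, hBv, hAv, div_eq_mul_inv]
    ring
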